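/- With W(x) = 3^{3/2}((1 + x₅)² + x₁² + x₂² + x₃² + x₄²)^{−3/2} on the closed upper half-space of ℝ⁵, one has lim_{R→∞} (log R)^{−1} ∫_{B⁵₊(0,R)} x₅ W(x)² dx = 27π²/2, i.e. the weighted L² mass of the bubble on the half-ball of radius R diverges logarithmically with this precise rate. -/

import Mathlib

open MeasureTheory Real Set Filter Topology

noncomputable section

/-- The standard bubble `W_{1,0}` for `n = 4`, `γ = 1/2`:
`W(x) = 3^{3/2}((1 + x₅)² + x₁² + x₂² + x₃² + x₄²)^{-3/2}`. -/
def Wb5 (x : Fin 5 → ℝ) : ℝ :=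
  (3 : ℝ) ^ ((3 : ℝ) / 2) *
    ((1 + x 4) ^ 2 + (x 0) ^ 2 + (x 1) ^ 2 + (x 2) ^ 2 + (x 3) ^ 2) ^ (-(3 : ℝ) / 2)

/-- The upper half-ball `B⁵₊(0,R)`. -/
def hBall5 (R : ℝ) : Set (Fin 5 → ℝ) := {x | (∑ i, (x i) ^ 2) < R ^ 2 ∧ 0 < x 4}

/-! ### Auxiliary definitions -/

/-- The integrand, rewritten with natural-number powers. -/
def G5 (x : Fin 5 → ℝ) : ℝ :=
  27 * x 4 * (((1 + x 4)^2 + ((x 0)^2+(x 1)^2+(x 2)^2+(x 3)^2))^3)⁻¹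

/-- The integrand on the product space `ℝ × ℝ⁴`. -/
def gP (p : ℝ × (Fin 4 → ℝ)) : ℝ := 27 * p.1 * (((1 + p.1)^2 + ∑ i, (p.2 i)^2)^3)⁻¹

/-- The ball of radius `A` in `Fin 4 → ℝ` (Euclidean metric). -/
def ballSet (A : ℝ) : Set (Fin 4 → ℝ) := {y | ∑ i, (y i)^2 < A^2}

/-- Slab `{|x̄| < A} × (0, B)` inside `Fin 5 → ℝ`. -/
def slab5 (A B : ℝ) : Set (Fin 5 → ℝ) :=
  {x | (x 0)^2+(x 1)^2+(x 2)^2+(x 3)^2 < A^2 ∧ x 4 ∈ Ioo 0 B}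

/-- Value of the radial integral. -/
def Kv (a A : ℝ) : ℝ := (4*a^2)⁻¹ - (2*(a^2+A^2))⁻¹ + a^2*(4*(a^2+A^2)^2)⁻¹

/-! ### The radial interval integral -/

lemma Kval (a : ℝ) (ha : 1 ≤ a) (A : ℝ) :
    ∫ y in (0:ℝ)..A, y^3 * (((a^2+y^2)^3)⁻¹)
      = (4*a^2)⁻¹ - (2*(a^2+A^2))⁻¹ + a^2*(4*(a^2+A^2)^2)⁻¹ := by
  have hpos : ∀ y : ℝ, (0:ℝ) < a^2 + y^2 := fun y => by positivity
  have hder : ∀ y ∈ uIcc (0:ℝ) A, HasDerivAt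
      (fun y => -(2*(a^2+y^2))⁻¹ + a^2*(4*(a^2+y^2)^2)⁻¹) (y^3 * (((a^2+y^2)^3)⁻¹)) y := by
    intro y _
    have h1 : HasDerivAt (fun y : ℝ => a^2 + y^2) (2*y) y := by
      simpa using ((hasDerivAt_pow 2 y).const_add (a^2))
    have h2 : HasDerivAt (fun y : ℝ => 2*(a^2+y^2)) (2*(2*y)) y := h1.const_mul 2
    have h3 : HasDerivAt (fun y : ℝ => 4*(a^2+y^2)^2) (4*(2*(a^2+y^2)*(2*y))) y := by
      have := (h1.pow 2).const_mul (4:ℝ)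
      refine this.congr_deriv ?_
      ring
    have h4 := (h2.inv (by positivity)).neg
    have h5 := (h3.inv (by positivity)).const_mul (a^2)
    refine (h4.add h5).congr_deriv ?_
    have hy := (hpos y).ne'
    field_simp
    ring
  rw [intervalIntegral.integral_eq_sub_of_hasDerivAt hder ?_]
  · have h0 := (hpos 0).ne'
    have hA := (hpos A).ne'
    simp only [pow_two, mul_zero, zero_mul, add_zero] at *
    field_simp
    ring
  · apply Continuous.intervalIntegrable
    fun_prop (disch := intro y; positivity)

/-! ### The inner 4-dimensional integral, via polar coordinates -/

lemma ball_vol : (volume (Metric.ball (0 : EuclideanSpace ℝ (Fin 4)) 1)).toReal = π^2/2 := by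
  rw [EuclideanSpace.volume_ball]
  simp only [Fintype.card_fin]
  rw [ENNReal.ofReal_one, one_pow, one_mul]
  rw [ENNReal.toReal_ofReal (by positivity)]
  have h4 : ((4:ℕ):ℝ)/2 + 1 = 3 := by norm_num
  rw [h4]
  have : Real.Gamma 3 = 2 := by
    have := Real.Gamma_nat_eq_factorial 2
    norm_num at this
    convert this using 2
    norm_num
  rw [this]
  rw [show (Real.sqrt π)^4 = (Real.sqrt π ^ 2)^2 by ring, Real.sq_sqrt pi_pos.le]

lemma ballSet_meas (A : ℝ) : MeasurableSet (ballSet A) := by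
  apply measurableSet_lt _ measurable_const
  fun_prop

lemma hpre (A : ℝ) (hA : 0 < A) :
    ((MeasurableEquiv.toLp 2 (Fin 4 → ℝ)).symm) ⁻¹' (ballSet A)
      = Metric.ball (0:EuclideanSpace ℝ (Fin 4)) A := by
  ext z
  have hzn : ∑ i, (((MeasurableEquiv.toLp 2 (Fin 4 → ℝ)).symm) z i)^2 = ‖z‖^2 := by
    rw [EuclideanSpace.norm_eq, Real.sq_sqrt (by positivity)]
    simp [Real.norm_eq_abs, sq_abs]
  simp only [mem_preimage, ballSet, mem_setOf_eq, Metric.mem_ball, dist_zero_right, hzn]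
  rw [pow_lt_pow_iff_left₀ (norm_nonneg z) hA.le (by norm_num)]

lemma ballSet_vol (A : ℝ) (hA : 0 < A) :
    volume (ballSet A) = volume (Metric.ball (0:EuclideanSpace ℝ (Fin 4)) A) := by
  rw [← hpre A hA]
  exact ((EuclideanSpace.volume_preserving_symm_measurableEquiv_toLp (Fin 4)).measure_preimage
    ((ballSet_meas A).nullMeasurableSet)).symm

lemma inner_eq (a : ℝ) (ha : 1 ≤ a) (A : ℝ) (hA : 0 < A) :
    ∫ y in {y : Fin 4 → ℝ | ∑ i, (y i)^2 < A^2}, ((a^2 + ∑ i, (y i)^2)^3)⁻¹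
      = 2*π^2 * ((4*a^2)⁻¹ - (2*(a^2+A^2))⁻¹ + a^2*(4*(a^2+A^2)^2)⁻¹) := by
  have hmp := EuclideanSpace.volume_preserving_symm_measurableEquiv_toLp (Fin 4)
  have hemb := ((MeasurableEquiv.toLp 2 (Fin 4 → ℝ)).symm).measurableEmbedding
  set φ := (MeasurableEquiv.toLp 2 (Fin 4 → ℝ)).symm with hφ
  have hzn : ∀ z : EuclideanSpace ℝ (Fin 4), ∑ i, (φ z i)^2 = ‖z‖^2 := by
    intro z
    rw [EuclideanSpace.norm_eq, Real.sq_sqrt (by positivity)]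
    simp [Real.norm_eq_abs, sq_abs]
    rfl
  have hpre' : φ ⁻¹' {y : Fin 4 → ℝ | ∑ i, (y i)^2 < A^2} = Metric.ball 0 A := hpre A hA
  rw [← hmp.setIntegral_preimage_emb hemb (fun y => ((a^2 + ∑ i, (y i)^2)^3)⁻¹)]
  simp only [hzn, hpre']
  rw [← integral_indicator measurableSet_ball]
  have hind : ∀ z : EuclideanSpace ℝ (Fin 4),
      (Metric.ball (0:EuclideanSpace ℝ (Fin 4)) A).indicator
        (fun z => ((a^2 + ‖z‖^2)^3)⁻¹) z
      = (Set.indicator (Iio A) (fun r => ((a^2 + r^2)^3)⁻¹)) ‖z‖ := by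
    intro z
    by_cases h : z ∈ Metric.ball (0:EuclideanSpace ℝ (Fin 4)) A
    · rw [indicator_of_mem h, indicator_of_mem (by rwa [mem_ball_zero_iff] at h)]
    · rw [indicator_of_notMem h, indicator_of_notMem (by rwa [mem_ball_zero_iff] at h)]
  simp only [hind]
  rw [integral_fun_norm_addHaar volume (Set.indicator (Iio A) (fun r => ((a^2 + r^2)^3)⁻¹))]
  rw [finrank_euclideanSpace_fin, measureReal_def, ball_vol]
  have hsub : ∫ y in Ioi (0:ℝ), y ^ (4-1) • (Set.indicator (Iio A) (fun r => ((a^2 + r^2)^3)⁻¹)) y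
      = ∫ y in Ioo (0:ℝ) A, y^3 * ((a^2+y^2)^3)⁻¹ := by
    rw [setIntegral_eq_of_subset_of_ae_diff_eq_zero measurableSet_Ioi.nullMeasurableSet
      (Ioo_subset_Ioi_self) ?_]
    · apply setIntegral_congr_fun measurableSet_Ioo
      intro y hy
      simp only [indicator_of_mem (show y ∈ Iio A from hy.2), smul_eq_mul]
    · filter_upwards with y hy
      rw [indicator_of_notMem, smul_zero]
      intro hmem
      exact hy.2 ⟨hy.1, hmem⟩
  rw [hsub]
  have : ∫ y in Ioo (0:ℝ) A, y^3 * ((a^2+y^2)^3)⁻¹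
      = ∫ y in (0:ℝ)..A, y^3 * ((a^2+y^2)^3)⁻¹ := by
    rw [intervalIntegral.integral_of_le hA.le, integral_Ioc_eq_integral_Ioo]
  rw [this, Kval a ha A]
  simp only [smul_eq_mul, nsmul_eq_mul]
  ring

/-! ### Integrability on the product slab and Fubini -/

lemma gP_meas : Measurable gP := by unfold gP; fun_prop

lemma gP_integrableOn (A B : ℝ) (hA : 0 < A) (hB : 0 < B) :
    IntegrableOn gP (Ioo 0 B ×ˢ ballSet A) (volume.prod volume) := by
  have hsm : MeasurableSet (Ioo (0:ℝ) B ×ˢ ballSet A) :=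
    measurableSet_Ioo.prod (ballSet_meas A)
  have hfin : (volume.prod volume) (Ioo (0:ℝ) B ×ˢ ballSet A) ≠ ⊤ := by
    rw [Measure.prod_prod, ballSet_vol A hA]
    exact (ENNReal.mul_lt_top (by simp [Real.volume_Ioo]) measure_ball_lt_top).ne
  apply Measure.integrableOn_of_bounded hfin (gP_meas.aestronglyMeasurable) (M := 27 * B)
  filter_upwards [ae_restrict_mem hsm] with p hp
  obtain ⟨⟨h0, hB'⟩, _⟩ := hp
  have h1 : (0:ℝ) < 1 + p.1 := by linarith
  have h3 : (0:ℝ) ≤ ∑ i, (p.2 i)^2 := by positivity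
  have hden : (1:ℝ) ≤ ((1 + p.1)^2 + ∑ i, (p.2 i)^2)^3 := by
    have h2 : (1:ℝ) ≤ (1+p.1)^2 := by nlinarith
    exact one_le_pow₀ (by linarith)
  simp only [gP]
  rw [Real.norm_eq_abs, abs_of_nonneg (mul_nonneg (by linarith) (by positivity))]
  calc 27 * p.1 * (((1 + p.1)^2 + ∑ i, (p.2 i)^2)^3)⁻¹
      ≤ 27 * p.1 * 1 := by
        apply mul_le_mul_of_nonneg_left _ (by positivity)
        exact inv_le_one_of_one_le₀ hden
    _ ≤ 27 * B := by nlinarith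

lemma slab_prod_val (A B : ℝ) (hA : 0 < A) (hB : 0 < B) :
    ∫ p in Ioo 0 B ×ˢ ballSet A, gP p ∂(volume.prod volume)
      = ∫ t in Ioo 0 B, 27 * t * (2*π^2 * Kv (1+t) A) := by
  rw [setIntegral_prod gP (gP_integrableOn A B hA hB)]
  apply setIntegral_congr_fun measurableSet_Ioo
  intro t ht
  have : ∀ y : Fin 4 → ℝ, gP (t, y) = (27*t) * (((1+t)^2 + ∑ i, (y i)^2)^3)⁻¹ := fun y => rfl
  simp only [this]
  rw [integral_const_mul]
  rw [show (ballSet A) = {y : Fin 4 → ℝ | ∑ i, (y i)^2 < A^2} from rfl]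
  rw [inner_eq (1+t) (by linarith [ht.1]) A hA]
  unfold Kv
  ring

/-! ### Transport to `Fin 5 → ℝ` -/

lemma sumEq (x : Fin 5 → ℝ) :
    ∑ j : Fin 4, (x ((4:Fin 5).succAbove j))^2 = (x 0)^2+(x 1)^2+(x 2)^2+(x 3)^2 := by
  rw [Fin.sum_univ_four]
  have h0 : (4:Fin 5).succAbove 0 = 0 := by decide
  have h1 : (4:Fin 5).succAbove 1 = 1 := by decide
  have h2 : (4:Fin 5).succAbove 2 = 2 := by decide
  have h3 : (4:Fin 5).succAbove 3 = 3 := by decide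
  rw [h0, h1, h2, h3]

lemma e_apply (x : Fin 5 → ℝ) :
    (MeasurableEquiv.piFinSuccAbove (fun _ : Fin 5 => ℝ) 4) x
      = (x 4, fun j => x ((4:Fin 5).succAbove j)) := rfl

lemma slab5_meas (A B : ℝ) : MeasurableSet (slab5 A B) := by
  unfold slab5
  rw [setOf_and]
  exact (measurableSet_lt (by fun_prop) measurable_const).inter
    ((measurable_pi_apply 4) measurableSet_Ioo)

lemma slab5_preim (A B : ℝ) :
    (MeasurableEquiv.piFinSuccAbove (fun _ : Fin 5 => ℝ) 4) ⁻¹' (Ioo 0 B ×ˢ ballSet A)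
      = slab5 A B := by
  ext x
  simp only [mem_preimage, e_apply, mem_prod, slab5, ballSet, mem_setOf_eq, sumEq x]
  tauto

lemma G5_comp (x : Fin 5 → ℝ) :
    G5 x = gP ((MeasurableEquiv.piFinSuccAbove (fun _ : Fin 5 => ℝ) 4) x) := by
  simp only [e_apply, gP, G5, sumEq x]

lemma slab5_transport (A B : ℝ) :
    ∫ x in slab5 A B, G5 x = ∫ p in Ioo 0 B ×ˢ ballSet A, gP p ∂(volume.prod volume) := by
  set e := MeasurableEquiv.piFinSuccAbove (fun _ : Fin 5 => ℝ) 4 with he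
  have hmp : MeasurePreserving e volume (volume.prod volume) :=
    volume_preserving_piFinSuccAbove (fun _ : Fin 5 => ℝ) 4
  rw [← hmp.setIntegral_preimage_emb e.measurableEmbedding gP, slab5_preim A B]
  exact setIntegral_congr_fun (slab5_meas A B) (fun x _ => G5_comp x)

lemma G5_integrableOn_slab (A B : ℝ) (hA : 0 < A) (hB : 0 < B) :
    IntegrableOn G5 (slab5 A B) := by
  set e := MeasurableEquiv.piFinSuccAbove (fun _ : Fin 5 => ℝ) 4 with he
  have hmp : MeasurePreserving e volume (volume.prod volume) :=
    volume_preserving_piFinSuccAbove (fun _ : Fin 5 => ℝ) 4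
  have := (hmp.integrableOn_comp_preimage e.measurableEmbedding).mpr
    (gP_integrableOn A B hA hB)
  rw [slab5_preim A B] at this
  exact this.congr_fun (fun x _ => (G5_comp x).symm) (slab5_meas A B)

/-! ### Bounds for the outer integral -/

lemma psi_int (B : ℝ) (hB : 0 ≤ B) :
    ∫ t in (0:ℝ)..B, t*((1+t)^2)⁻¹ = log (1+B) + (1+B)⁻¹ - 1 := by
  have hne : ∀ t ∈ uIcc (0:ℝ) B, (1:ℝ) + t ≠ 0 := by
    intro t ht
    rw [uIcc_of_le hB] at ht
    have := ht.1
    positivity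
  have hder : ∀ t ∈ uIcc (0:ℝ) B,
      HasDerivAt (fun t => log (1+t) + (1+t)⁻¹) (t*((1+t)^2)⁻¹) t := by
    intro t ht
    have h1 : HasDerivAt (fun t : ℝ => 1 + t) 1 t := by
      simpa using (hasDerivAt_id t).const_add 1
    have h2 := (h1.log (hne t ht))
    have h3 := (h1.inv (hne t ht))
    refine (h2.add h3).congr_deriv ?_
    have := hne t ht
    field_simp
    ring
  rw [intervalIntegral.integral_eq_sub_of_hasDerivAt hder ?_]
  · norm_num
  · apply ContinuousOn.intervalIntegrable
    apply ContinuousOn.mul continuousOn_id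
    apply ContinuousOn.inv₀ (by fun_prop)
    intro t ht
    exact pow_ne_zero 2 (hne t ht)

lemma contOn_aux (B : ℝ) (hB : 0 < B) :
    ContinuousOn (fun t : ℝ => 27*t*(2*π^2 * Kv (1+t) B)) (Icc 0 B) := by
  have h1 : ContinuousOn (fun t : ℝ => (4*(1+t)^2)⁻¹) (Icc 0 B) := by
    apply ContinuousOn.inv₀ (by fun_prop)
    intro t ht
    have := ht.1
    positivity
  have h2 : ContinuousOn (fun t : ℝ => (2*((1+t)^2+B^2))⁻¹) (Icc 0 B) := by
    apply ContinuousOn.inv₀ (by fun_prop)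
    intro t _
    positivity
  have h3 : ContinuousOn (fun t : ℝ => (1+t)^2*(4*((1+t)^2+B^2)^2)⁻¹) (Icc 0 B) := by
    apply ContinuousOn.mul (by fun_prop)
    apply ContinuousOn.inv₀ (by fun_prop)
    intro t _
    positivity
  unfold Kv
  exact ContinuousOn.mul (by fun_prop) (ContinuousOn.mul continuousOn_const ((h1.sub h2).add h3))

lemma slab_t_upper (B : ℝ) (hB : 0 < B) :
    ∫ t in Ioo (0:ℝ) B, 27*t*(2*π^2 * Kv (1+t) B)
      ≤ 27*π^2/2 * (log (1+B) + (1+B)⁻¹ - 1) := by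
  have hψ : IntegrableOn (fun t : ℝ => 27*π^2/2 * (t*((1+t)^2)⁻¹)) (Ioo 0 B) := by
    apply IntegrableOn.mono_set _ Ioo_subset_Icc_self
    apply ContinuousOn.integrableOn_Icc
    apply ContinuousOn.mul continuousOn_const
    apply ContinuousOn.mul continuousOn_id
    apply ContinuousOn.inv₀ (by fun_prop)
    intro t ht
    have := ht.1
    positivity
  have hf : IntegrableOn (fun t : ℝ => 27*t*(2*π^2 * Kv (1+t) B)) (Ioo 0 B) :=
    ((contOn_aux B hB).integrableOn_Icc).mono_set Ioo_subset_Icc_self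
  have hle : ∫ t in Ioo (0:ℝ) B, 27*t*(2*π^2 * Kv (1+t) B)
      ≤ ∫ t in Ioo (0:ℝ) B, 27*π^2/2 * (t*((1+t)^2)⁻¹) := by
    apply setIntegral_mono_on hf hψ measurableSet_Ioo
    intro t ht
    have ht0 : 0 < t := ht.1
    have hu : (0:ℝ) < (1+t)^2 + B^2 := by positivity
    have hKle : Kv (1+t) B ≤ (4*(1+t)^2)⁻¹ := by
      unfold Kv
      have hterm : (1+t)^2*(4*((1+t)^2+B^2)^2)⁻¹ ≤ (2*((1+t)^2+B^2))⁻¹ := by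
        rw [inv_eq_one_div, inv_eq_one_div, mul_one_div,
          div_le_div_iff₀ (by positivity) (by positivity)]
        nlinarith [mul_nonneg hu.le
          (show (0:ℝ) ≤ 2*((1+t)^2+B^2) - (1+t)^2 by nlinarith [sq_nonneg B])]
      linarith
    calc 27*t*(2*π^2 * Kv (1+t) B) ≤ 27*t*(2*π^2 * (4*(1+t)^2)⁻¹) := by
          apply mul_le_mul_of_nonneg_left _ (by positivity)
          apply mul_le_mul_of_nonneg_left hKle (by positivity)
      _ = 27*π^2/2 * (t*((1+t)^2)⁻¹) := by
          have h1t : (1:ℝ)+t ≠ 0 := by positivity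
          field_simp
          ring
  calc _ ≤ _ := hle
    _ = ∫ t in (0:ℝ)..B, 27*π^2/2 * (t*((1+t)^2)⁻¹) := by
        rw [intervalIntegral.integral_of_le hB.le, integral_Ioc_eq_integral_Ioo]
    _ = 27*π^2/2 * (log (1+B) + (1+B)⁻¹ - 1) := by
        rw [intervalIntegral.integral_const_mul, psi_int B hB.le]

lemma slab_t_lower (B : ℝ) (hB : 0 < B) :
    27*π^2/2 * (log (1+B) + (1+B)⁻¹ - 1) - 27*π^2/2
      ≤ ∫ t in Ioo (0:ℝ) B, 27*t*(2*π^2 * Kv (1+t) B) := by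
  have hψ : IntegrableOn
      (fun t : ℝ => 27*π^2/2 * (t*((1+t)^2)⁻¹) - 27*π^2*(t*(B^2)⁻¹)) (Ioo 0 B) := by
    apply IntegrableOn.mono_set _ Ioo_subset_Icc_self
    apply ContinuousOn.integrableOn_Icc
    apply ContinuousOn.sub _ (by fun_prop)
    apply ContinuousOn.mul continuousOn_const
    apply ContinuousOn.mul continuousOn_id
    apply ContinuousOn.inv₀ (by fun_prop)
    intro t ht
    have := ht.1
    positivity
  have hf : IntegrableOn (fun t : ℝ => 27*t*(2*π^2 * Kv (1+t) B)) (Ioo 0 B) :=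
    ((contOn_aux B hB).integrableOn_Icc).mono_set Ioo_subset_Icc_self
  have hle : ∫ t in Ioo (0:ℝ) B, (27*π^2/2 * (t*((1+t)^2)⁻¹) - 27*π^2*(t*(B^2)⁻¹))
      ≤ ∫ t in Ioo (0:ℝ) B, 27*t*(2*π^2 * Kv (1+t) B) := by
    apply setIntegral_mono_on hψ hf measurableSet_Ioo
    intro t ht
    have ht0 : 0 < t := ht.1
    have hu : (0:ℝ) < (1+t)^2 + B^2 := by positivity
    have h1t : (1:ℝ)+t ≠ 0 := by positivity
    have hKge : (4*(1+t)^2)⁻¹ - (2*B^2)⁻¹ ≤ Kv (1+t) B := by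
      unfold Kv
      have hterm : (2*((1+t)^2+B^2))⁻¹ ≤ (2*B^2)⁻¹ := by
        apply inv_anti₀ (by positivity)
        nlinarith [sq_nonneg (1+t)]
      have hlast : (0:ℝ) ≤ (1+t)^2*(4*((1+t)^2+B^2)^2)⁻¹ := by positivity
      linarith
    calc 27*π^2/2 * (t*((1+t)^2)⁻¹) - 27*π^2*(t*(B^2)⁻¹)
        = 27*t*(2*π^2 * ((4*(1+t)^2)⁻¹ - (2*B^2)⁻¹)) := by
          have hBne : (B:ℝ) ≠ 0 := hB.ne'
          field_simp
          ring
      _ ≤ 27*t*(2*π^2 * Kv (1+t) B) := by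
          apply mul_le_mul_of_nonneg_left _ (by positivity)
          apply mul_le_mul_of_nonneg_left hKge (by positivity)
  refine le_trans (le_of_eq ?_) hle
  have heq : ∫ t in Ioo (0:ℝ) B, (27*π^2/2 * (t*((1+t)^2)⁻¹) - 27*π^2*(t*(B^2)⁻¹))
      = ∫ t in (0:ℝ)..B, (27*π^2/2 * (t*((1+t)^2)⁻¹) - 27*π^2*(t*(B^2)⁻¹)) := by
    rw [intervalIntegral.integral_of_le hB.le, integral_Ioc_eq_integral_Ioo]
  rw [heq]
  have hI1 : IntervalIntegrable (fun t : ℝ => 27*π^2/2 * (t*((1+t)^2)⁻¹)) volume 0 B := by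
    apply ContinuousOn.intervalIntegrable
    rw [uIcc_of_le hB.le]
    apply ContinuousOn.mul continuousOn_const
    apply ContinuousOn.mul continuousOn_id
    apply ContinuousOn.inv₀ (by fun_prop)
    intro t ht
    have := ht.1
    positivity
  have hI2 : IntervalIntegrable (fun t : ℝ => 27*π^2*(t*(B^2)⁻¹)) volume 0 B :=
    (Continuous.intervalIntegrable (by fun_prop) 0 B)
  rw [intervalIntegral.integral_sub hI1 hI2, intervalIntegral.integral_const_mul,
    psi_int B hB.le]
  have hv : ∫ t in (0:ℝ)..B, 27*π^2*(t*(B^2)⁻¹) = 27*π^2/2 := by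
    have hrw : ∀ t : ℝ, 27*π^2*(t*(B^2)⁻¹) = (27*π^2*(B^2)⁻¹) * t := fun t => by ring
    simp only [hrw]
    rw [intervalIntegral.integral_const_mul, integral_id]
    have hBne : (B:ℝ) ≠ 0 := hB.ne'
    field_simp
    ring
  rw [hv]

/-! ### Pointwise identification of the integrand -/

lemma wb5_eq (x : Fin 5 → ℝ) (hx : 0 < x 4) : x 4 * Wb5 x ^ 2 = G5 x := by
  unfold Wb5 G5
  set b : ℝ := (1 + x 4) ^ 2 + (x 0) ^ 2 + (x 1) ^ 2 + (x 2) ^ 2 + (x 3) ^ 2 with hb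
  have hbpos : 0 < b := by
    have : (0:ℝ) < (1 + x 4)^2 := by positivity
    have h0 := sq_nonneg (x 0); have h1 := sq_nonneg (x 1)
    have h2 := sq_nonneg (x 2); have h3 := sq_nonneg (x 3)
    rw [hb]; linarith
  have e1 : ((3:ℝ) ^ ((3:ℝ)/2))^2 = 27 := by
    rw [← Real.rpow_natCast ((3:ℝ) ^ ((3:ℝ)/2)) 2, ← Real.rpow_mul (by norm_num)]
    norm_num
  have e2 : (b ^ (-(3:ℝ)/2))^2 = (b^3)⁻¹ := by
    rw [← Real.rpow_natCast (b ^ (-(3:ℝ)/2)) 2, ← Real.rpow_mul hbpos.le]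
    rw [show (-(3:ℝ)/2 * (2:ℕ)) = -(3:ℝ) by norm_num]
    rw [Real.rpow_neg hbpos.le, show ((3:ℝ):ℝ) = ((3:ℕ):ℝ) by norm_num, Real.rpow_natCast]
  rw [mul_pow, e1, e2, hb]
  ring

/-! ### Set inclusions -/

lemma hBall5_meas (R : ℝ) : MeasurableSet (hBall5 R) := by
  unfold hBall5
  rw [setOf_and]
  exact (measurableSet_lt (by fun_prop) measurable_const).inter
    (measurableSet_lt measurable_const (measurable_pi_apply 4))

lemma incl1 (R : ℝ) (hR : 0 < R) : hBall5 R ⊆ slab5 R R := by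
  intro x hx
  obtain ⟨hsum, hx4⟩ := hx
  rw [Fin.sum_univ_five] at hsum
  refine ⟨by nlinarith [sq_nonneg (x 4)], hx4, ?_⟩
  nlinarith [sq_nonneg (x 4 - R)]

lemma incl2 (R : ℝ) (hR : 0 < R) : slab5 (R/√2) (R/√2) ⊆ hBall5 R := by
  intro x hx
  obtain ⟨hsum, hx40, hx4⟩ := hx
  have hhalf : (R/√2)^2 = R^2/2 := by
    rw [div_pow, Real.sq_sqrt (by norm_num)]
  refine ⟨?_, hx40⟩
  rw [Fin.sum_univ_five]
  rw [hhalf] at hsum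
  have hx4sq : (x 4)^2 < R^2/2 := by
    rw [← hhalf]
    exact pow_lt_pow_left₀ hx4 hx40.le (by norm_num)
  linarith

/-! ### Asymptotics -/

lemma log_ratio (c : ℝ) (hc : 0 < c) :
    Tendsto (fun R : ℝ => (Real.log R)⁻¹ * Real.log (1 + c*R)) atTop (nhds 1) := by
  have h2 : Tendsto (fun R : ℝ => (Real.log R)⁻¹) atTop (nhds 0) :=
    Real.tendsto_log_atTop.inv_tendsto_atTop
  have haux : Tendsto (fun R : ℝ => R⁻¹ + c) atTop (nhds (0 + c)) :=
    tendsto_inv_atTop_zero.add_const c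
  have hlog : Tendsto (fun R : ℝ => Real.log (R⁻¹ + c)) atTop (nhds (Real.log c)) := by
    rw [zero_add] at haux
    exact (Real.continuousAt_log hc.ne').tendsto.comp haux
  have h1 : Tendsto (fun R : ℝ => Real.log (1 + c*R) - Real.log R) atTop (nhds (Real.log c)) := by
    apply hlog.congr'
    filter_upwards [eventually_gt_atTop (0:ℝ)] with R hR
    have hcR : (0:ℝ) < 1 + c*R := by positivity
    rw [← Real.log_div hcR.ne' hR.ne']
    congr 1
    field_simp
  have hmain : Tendsto (fun R : ℝ => (Real.log R)⁻¹ * (Real.log (1 + c*R) - Real.log R) + 1)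
      atTop (nhds 1) := by
    have := (h2.mul h1).add_const 1
    rw [zero_mul, zero_add] at this
    exact this
  apply hmain.congr'
  filter_upwards [eventually_gt_atTop (1:ℝ)] with R hR
  have hlogR : Real.log R ≠ 0 := (Real.log_pos hR).ne'
  field_simp
  ring

lemma bound_lim (c d : ℝ) (hc : 0 < c) :
    Tendsto (fun R : ℝ => (Real.log R)⁻¹ *
        (27*π^2/2 * (log (1+c*R) + (1+c*R)⁻¹ - 1) + d)) atTop (nhds (27*π^2/2)) := by
  have h2 : Tendsto (fun R : ℝ => (Real.log R)⁻¹) atTop (nhds 0) :=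
    Real.tendsto_log_atTop.inv_tendsto_atTop
  have t0 : Tendsto (fun R : ℝ => 1 + c*R) atTop atTop := by
    apply tendsto_atTop_add_const_left
    exact Tendsto.const_mul_atTop hc tendsto_id
  have t1 : Tendsto (fun R : ℝ => (1+c*R)⁻¹) atTop (nhds 0) :=
    tendsto_inv_atTop_zero.comp t0
  have t2 : Tendsto (fun R : ℝ => 27*π^2/2 * ((1+c*R)⁻¹ - 1) + d) atTop
      (nhds (27*π^2/2 * (0 - 1) + d)) := ((t1.sub_const 1).const_mul _).add_const d
  have t3 : Tendsto (fun R : ℝ => (Real.log R)⁻¹ * (27*π^2/2 * ((1+c*R)⁻¹ - 1) + d))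
      atTop (nhds 0) := by
    have := h2.mul t2
    rwa [zero_mul] at this
  have t4 : Tendsto (fun R : ℝ => 27*π^2/2 * ((Real.log R)⁻¹ * Real.log (1 + c*R)))
      atTop (nhds (27*π^2/2 * 1)) := (log_ratio c hc).const_mul _
  have := t4.add t3
  rw [mul_one, add_zero] at this
  apply this.congr
  intro R
  ring

/-! ### Main theorem -/

/-- `lim_{R→∞} (log R)⁻¹ ∫_{B⁵₊(0,R)} x₅ W² dx = 27π²/2`: the weighted `L²` mass of the
bubble diverges logarithmically with rate `27π²/2`. -/
theorem statement19 :
    Tendsto (fun R : ℝ => (Real.log R)⁻¹ * ∫ x in hBall5 R, x 4 * (Wb5 x) ^ 2)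
      atTop (nhds (27 * Real.pi ^ 2 / 2)) := by
  have hs2 : (0:ℝ) < √2 := by positivity
  have hls : Tendsto (fun R : ℝ => (Real.log R)⁻¹ *
      (27*π^2/2 * (log (1+(√2)⁻¹*R) + (1+(√2)⁻¹*R)⁻¹ - 1) + (-(27*π^2/2))))
      atTop (nhds (27*π^2/2)) := bound_lim (√2)⁻¹ (-(27*π^2/2)) (by positivity)
  have hus : Tendsto (fun R : ℝ => (Real.log R)⁻¹ *
      (27*π^2/2 * (log (1+1*R) + (1+1*R)⁻¹ - 1) + 0))
      atTop (nhds (27*π^2/2)) := bound_lim 1 0 one_pos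
  have hgoal : (27 * Real.pi ^ 2 / 2 : ℝ) = 27*π^2/2 := rfl
  rw [hgoal]
  apply tendsto_of_tendsto_of_tendsto_of_le_of_le' hls hus
  · -- lower bound
    filter_upwards [eventually_ge_atTop (2:ℝ)] with R hR
    have hR0 : (0:ℝ) < R := by linarith
    have hlogR : (0:ℝ) < Real.log R := Real.log_pos (by linarith)
    have hB : (0:ℝ) < R/√2 := by positivity
    apply mul_le_mul_of_nonneg_left _ (inv_nonneg.mpr hlogR.le)
    have hFeq : ∫ x in hBall5 R, x 4 * (Wb5 x) ^ 2 = ∫ x in hBall5 R, G5 x :=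
      setIntegral_congr_fun (hBall5_meas R) (fun x hx => wb5_eq x hx.2)
    rw [hFeq]
    have hIntSlab : IntegrableOn G5 (slab5 R R) := G5_integrableOn_slab R R hR0 hR0
    have hIntBall : IntegrableOn G5 (hBall5 R) := hIntSlab.mono_set (incl1 R hR0)
    have hmono : ∫ x in slab5 (R/√2) (R/√2), G5 x ≤ ∫ x in hBall5 R, G5 x := by
      apply setIntegral_mono_set hIntBall ?_ (HasSubset.Subset.eventuallyLE (incl2 R hR0))
      filter_upwards [ae_restrict_mem (hBall5_meas R)] with x hx
      have hx4 := hx.2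
      unfold G5
      have h1 : (0:ℝ) < 1 + x 4 := by linarith
      positivity
    have hval : ∫ x in slab5 (R/√2) (R/√2), G5 x
        = ∫ t in Ioo (0:ℝ) (R/√2), 27*t*(2*π^2 * Kv (1+t) (R/√2)) := by
      rw [slab5_transport, slab_prod_val _ _ hB hB]
    have hlow := slab_t_lower (R/√2) hB
    have hrw : R/√2 = (√2)⁻¹*R := by rw [div_eq_inv_mul]
    calc 27*π^2/2 * (log (1+(√2)⁻¹*R) + (1+(√2)⁻¹*R)⁻¹ - 1) + (-(27*π^2/2))
        = 27*π^2/2 * (log (1+R/√2) + (1+R/√2)⁻¹ - 1) - 27*π^2/2 := by rw [hrw]; ring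
      _ ≤ ∫ t in Ioo (0:ℝ) (R/√2), 27*t*(2*π^2 * Kv (1+t) (R/√2)) := hlow
      _ = ∫ x in slab5 (R/√2) (R/√2), G5 x := hval.symm
      _ ≤ ∫ x in hBall5 R, G5 x := hmono
  · -- upper bound
    filter_upwards [eventually_ge_atTop (2:ℝ)] with R hR
    have hR0 : (0:ℝ) < R := by linarith
    have hlogR : (0:ℝ) < Real.log R := Real.log_pos (by linarith)
    apply mul_le_mul_of_nonneg_left _ (inv_nonneg.mpr hlogR.le)
    have hFeq : ∫ x in hBall5 R, x 4 * (Wb5 x) ^ 2 = ∫ x in hBall5 R, G5 x :=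
      setIntegral_congr_fun (hBall5_meas R) (fun x hx => wb5_eq x hx.2)
    rw [hFeq]
    have hIntSlab : IntegrableOn G5 (slab5 R R) := G5_integrableOn_slab R R hR0 hR0
    have hmono : ∫ x in hBall5 R, G5 x ≤ ∫ x in slab5 R R, G5 x := by
      apply setIntegral_mono_set hIntSlab ?_ (HasSubset.Subset.eventuallyLE (incl1 R hR0))
      filter_upwards [ae_restrict_mem (slab5_meas R R)] with x hx
      have hx4 := hx.2.1
      unfold G5
      have h1 : (0:ℝ) < 1 + x 4 := by linarith
      positivity
    have hval : ∫ x in slab5 R R, G5 x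
        = ∫ t in Ioo (0:ℝ) R, 27*t*(2*π^2 * Kv (1+t) R) := by
      rw [slab5_transport, slab_prod_val _ _ hR0 hR0]
    calc ∫ x in hBall5 R, G5 x ≤ ∫ x in slab5 R R, G5 x := hmono
      _ = ∫ t in Ioo (0:ℝ) R, 27*t*(2*π^2 * Kv (1+t) R) := hval
      _ ≤ 27*π^2/2 * (log (1+R) + (1+R)⁻¹ - 1) := slab_t_upper R hR0
      _ = 27*π^2/2 * (log (1+1*R) + (1+1*R)⁻¹ - 1) + 0 := by rw [one_mul]; ring
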